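/- arXiv:2010.02268 — 2 statements merged into one kernel-verified Lean document; each statement's English description precedes it below -/
import Mathlib

section
/- For the maximal class-c Lie algebra M_c over F_p (c ≥ 2), the number of ideals of codimension k is: 1 for k=0, 1+p for k=1, and 1 for each k with 2 ≤ k ≤ c+1. In particular, M_c(F_p) has exactly one ideal of codimension k for each 2 ≤ k ≤ c+1. -/
open Module

section Aux
variable {p c : ℕ} [Fact p.Prime] {L : Type*} [LieRing L] [LieAlgebra (ZMod p) L]
variable (b : Basis (Fin (c + 1)) (ZMod p) L)
variable (hc : 2 ≤ c)
variable (hbr : ∀ (i : ℕ) (h1 : 1 ≤ i) (h2 : i ≤ c - 1),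
      ⁅b ⟨0, Nat.succ_pos c⟩, b ⟨i, Nat.lt_succ_of_le (by omega : i ≤ c)⟩⁆ = b ⟨i + 1, Nat.succ_lt_succ (by omega : i < c)⟩)
variable (h0c : ⁅b ⟨0, Nat.succ_pos c⟩, b ⟨c, Nat.lt_succ_self c⟩⁆ = 0)
variable (hz : ∀ i j : Fin (c + 1), 1 ≤ (i : ℕ) → 1 ≤ (j : ℕ) → ⁅b i, b j⁆ = 0)

/-- span of basis vectors with index ≥ k -/
def SS (k : ℕ) : Submodule (ZMod p) L := Submodule.span (ZMod p) (b '' {i | k ≤ (i : ℕ)})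

lemma mem_SS {k : ℕ} {y : L} : y ∈ SS b k ↔ ∀ i : Fin (c+1), (i:ℕ) < k → b.repr y i = 0 := by
  rw [SS, Basis.mem_span_image]
  simp only [Set.subset_def, Finset.mem_coe, Finsupp.mem_support_iff, Set.mem_setOf_eq]
  exact ⟨fun h i hik => by_contra fun hne => absurd (h i hne) (by omega),
    fun h i hne => le_of_not_gt fun hlt => hne (h i hlt)⟩

lemma b_mem_SS {k : ℕ} {i : Fin (c+1)} (h : k ≤ (i:ℕ)) : b i ∈ SS b k :=
  Submodule.subset_span ⟨i, h, rfl⟩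

lemma finrank_SS {k : ℕ} (hk : k ≤ c + 1) : finrank (ZMod p) (SS b k) = c + 1 - k := by
  have hf : Function.Injective (fun j : Fin (c+1-k) => (⟨(j:ℕ) + k, by omega⟩ : Fin (c+1))) := by
    intro a b h
    simp only [Fin.mk.injEq] at h
    exact Fin.ext (by omega)
  have hli : LinearIndependent (ZMod p) (fun j : Fin (c+1-k) => b ⟨(j:ℕ) + k, by omega⟩) :=
    b.linearIndependent.comp _ hf
  have hset : b '' {i | k ≤ (i:ℕ)} = Set.range (fun j : Fin (c+1-k) => b ⟨(j:ℕ) + k, by omega⟩) := by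
    ext x
    simp only [Set.mem_image, Set.mem_range, Set.mem_setOf_eq]
    constructor
    · rintro ⟨i, hi, rfl⟩
      exact ⟨⟨(i:ℕ) - k, by omega⟩, by congr 1; exact Fin.ext (by simp; omega)⟩
    · rintro ⟨j, rfl⟩
      exact ⟨_, by simp, rfl⟩
  rw [SS, hset, finrank_span_eq_card hli, Fintype.card_fin]


noncomputable def ad0 : Module.End (ZMod p) L := LieAlgebra.ad (ZMod p) L (b ⟨0, Nat.succ_pos c⟩)

include hc hbr h0c in
lemma lie_b0' (i : Fin (c+1)) :
    ⁅b ⟨0, Nat.succ_pos c⟩, b i⁆ =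
      if h : 1 ≤ (i:ℕ) ∧ (i:ℕ) < c then b ⟨(i:ℕ)+1, by omega⟩ else 0 := by
  by_cases h : 1 ≤ (i:ℕ) ∧ (i:ℕ) < c
  · rw [dif_pos h]
    exact hbr (i:ℕ) h.1 (by omega)
  · rw [dif_neg h]
    rcases Nat.lt_or_ge (i:ℕ) 1 with h1 | h1
    · have hi0 : i = ⟨0, Nat.succ_pos c⟩ := Fin.ext (show (i:ℕ) = 0 by omega)
      rw [hi0, lie_self]
    · have hic : i = ⟨c, by omega⟩ := Fin.ext (show (i:ℕ) = c by omega)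
      rw [hic]
      exact h0c

include hc hbr h0c in
lemma pow_ad (m : ℕ) (i : Fin (c+1)) (h1 : 1 ≤ (i:ℕ)) :
    (ad0 b ^ m) (b i) = if h : (i:ℕ) + m ≤ c then b ⟨(i:ℕ)+m, by omega⟩ else 0 := by
  induction m with
  | zero =>
    simp only [pow_zero, Module.End.one_apply, add_zero]
    rw [dif_pos (by omega)]
  | succ m ih =>
    rw [pow_succ', Module.End.mul_apply, ih]
    by_cases h : (i:ℕ) + m ≤ c
    · rw [dif_pos h]
      rw [show ad0 b (b ⟨(i:ℕ)+m, by omega⟩) = ⁅b ⟨0, Nat.succ_pos c⟩, b ⟨(i:ℕ)+m, by omega⟩⁆ from rfl]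
      rw [lie_b0' b hc hbr h0c]
      by_cases h2 : (i:ℕ) + m < c
      · rw [dif_pos (show 1 ≤ (i:ℕ)+m ∧ (i:ℕ)+m < c from ⟨by omega, h2⟩),
          dif_pos (by omega)]
        exact congrArg b (Fin.ext rfl)
      · rw [dif_neg (show ¬(1 ≤ (i:ℕ)+m ∧ (i:ℕ)+m < c) from by omega),
          dif_neg (by omega)]
    · rw [dif_neg h, map_zero, dif_neg (by omega)]

include hc hbr h0c in
lemma pow_ad_zero (m : ℕ) (hm : 1 ≤ m) : (ad0 b ^ m) (b ⟨0, Nat.succ_pos c⟩) = 0 := by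
  cases m with
  | zero => omega
  | succ k =>
    rw [pow_succ, Module.End.mul_apply]
    have : ad0 b (b ⟨0, Nat.succ_pos c⟩) = 0 := by
      simpa [ad0] using lie_self (b ⟨0, Nat.succ_pos c⟩)
    rw [this, map_zero]

include hc hbr h0c in
lemma pow_ad_top : ad0 b ^ (c+1) = 0 := by
  apply b.ext
  intro i
  rcases Nat.lt_or_ge 0 (i:ℕ) with h1 | h1
  · rw [pow_ad b hc hbr h0c (c+1) i (by omega), dif_neg (by omega)]; rfl
  · have : i = ⟨0, Nat.succ_pos c⟩ := Fin.ext (show (i:ℕ) = 0 by omega)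
    rw [this, pow_ad_zero b hc hbr h0c _ (by omega)]; rfl

lemma lie_mem_of_forall_basis {W : Submodule (ZMod p) L} {y : L}
    (h : ∀ i : Fin (c+1), ⁅b i, y⁆ ∈ W) (x : L) : ⁅x, y⁆ ∈ W := by
  have hle : (⊤ : Submodule (ZMod p) L) ≤ W.comap (LieAlgebra.ad (ZMod p) L y) := by
    rw [← b.span_eq]
    refine Submodule.span_le.mpr ?_
    rintro _ ⟨i, rfl⟩
    simp only [SetLike.mem_coe, Submodule.mem_comap, LieAlgebra.ad_apply]
    rw [← lie_skew]
    exact neg_mem (h i)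
  have hx : ⁅y, x⁆ ∈ W := hle Submodule.mem_top
  rw [← lie_skew]
  exact neg_mem hx

include hc hbr h0c hz in
lemma lie_bb_SS2 (i j : Fin (c+1)) : ⁅b i, b j⁆ ∈ SS b 2 := by
  rcases Nat.eq_zero_or_pos (i:ℕ) with hi | hi
  · have : i = ⟨0, Nat.succ_pos c⟩ := Fin.ext hi
    rw [this, lie_b0' b hc hbr h0c]
    split
    · next hcnd => exact b_mem_SS b (by simp only [Fin.val_mk]; omega)
    · exact zero_mem _
  · rcases Nat.eq_zero_or_pos (j:ℕ) with hj | hj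
    · have : j = ⟨0, Nat.succ_pos c⟩ := Fin.ext hj
      rw [this, ← lie_skew]
      refine neg_mem ?_
      rw [lie_b0' b hc hbr h0c]
      split
      · next hcnd => exact b_mem_SS b (by simp only [Fin.val_mk]; omega)
      · exact zero_mem _
    · rw [hz i j hi hj]; exact zero_mem _

include hc hbr h0c hz in
lemma lie_bb_SSk {k : ℕ} (hk : 1 ≤ k) (i j : Fin (c+1)) (hj : k ≤ (j:ℕ)) :
    ⁅b i, b j⁆ ∈ SS b k := by
  rcases Nat.eq_zero_or_pos (i:ℕ) with hi | hi
  · have : i = ⟨0, Nat.succ_pos c⟩ := Fin.ext hi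
    rw [this, lie_b0' b hc hbr h0c]
    split
    · next hcnd => exact b_mem_SS b (by simp only [Fin.val_mk]; omega)
    · exact zero_mem _
  · rw [hz i j hi (by omega)]; exact zero_mem _

include hc hbr h0c hz in
lemma lie_mem_SS2 (x y : L) : ⁅x, y⁆ ∈ SS b 2 := by
  refine lie_mem_of_forall_basis b (fun i => ?_) x
  rw [← lie_skew]
  refine neg_mem ?_
  exact lie_mem_of_forall_basis b (fun i' => lie_bb_SS2 b hc hbr h0c hz i' i) y

include hc hbr h0c hz in
lemma SS_lie_mem {k : ℕ} (hk : 1 ≤ k) {y : L} (hy : y ∈ SS b k) (x : L) :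
    ⁅x, y⁆ ∈ SS b k := by
  refine lie_mem_of_forall_basis b (fun i => ?_) x
  have hle : SS b k ≤ (SS b k).comap (LieAlgebra.ad (ZMod p) L (b i)) := by
    rw [SS]
    refine Submodule.span_le.mpr ?_
    rintro _ ⟨j, hj, rfl⟩
    simp only [SetLike.mem_coe, Submodule.mem_comap, LieAlgebra.ad_apply]
    exact lie_bb_SSk b hc hbr h0c hz hk i j hj
  exact hle hy

include hc hbr h0c hz in
lemma exists_JJ (k : ℕ) (hk : 1 ≤ k) :
    ∃ I : LieIdeal (ZMod p) L, I.toSubmodule = SS b k :=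
  ⟨{ SS b k with lie_mem := fun {x m} hm => SS_lie_mem b hc hbr h0c hz hk hm x }, rfl⟩

include hc hbr h0c hz in
lemma exists_ideal_of_SS2_le {W : Submodule (ZMod p) L} (hW : SS b 2 ≤ W) :
    ∃ I : LieIdeal (ZMod p) L, I.toSubmodule = W :=
  ⟨{ W with lie_mem := fun {x m} _hm => hW (lie_mem_SS2 b hc hbr h0c hz x m) }, rfl⟩


include hc hbr h0c hz in
lemma key1 (I : LieIdeal (ZMod p) L) {y : L} (hy : y ∈ I)
    (h0 : b.repr y ⟨0, Nat.succ_pos c⟩ ≠ 0) :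
    SS b 2 ≤ I.toSubmodule ∧ c ≤ finrank (ZMod p) I := by
  haveI : FiniteDimensional (ZMod p) L := Module.Finite.of_basis b
  set a := b.repr y ⟨0, Nat.succ_pos c⟩ with ha
  have hy' : y - a • b ⟨0, Nat.succ_pos c⟩ ∈ SS b 1 := by
    rw [mem_SS]
    intro i hi
    have hi0 : i = ⟨0, Nat.succ_pos c⟩ := Fin.ext (show (i:ℕ) = 0 by omega)
    rw [hi0]
    simp [ha]
  have hb1y : ⁅b ⟨1, by omega⟩, y⁆ = a • ⁅b ⟨1, by omega⟩, b ⟨0, Nat.succ_pos c⟩⁆ := by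
    have hker : SS b 1 ≤ LinearMap.ker (LieAlgebra.ad (ZMod p) L (b ⟨1, by omega⟩)) := by
      rw [SS]
      refine Submodule.span_le.mpr ?_
      rintro _ ⟨j, hj, rfl⟩
      simp only [SetLike.mem_coe, LinearMap.mem_ker, LieAlgebra.ad_apply]
      exact hz _ j (by norm_num) hj
    have h1 : ⁅b ⟨1, by omega⟩, y - a • b ⟨0, Nat.succ_pos c⟩⁆ = 0 := by
      have := hker hy'
      simpa only [LinearMap.mem_ker, LieAlgebra.ad_apply] using this
    rw [lie_sub, lie_smul, sub_eq_zero] at h1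
    exact h1
  have hb10 : ⁅b ⟨1, by omega⟩, b ⟨0, Nat.succ_pos c⟩⁆ = - b ⟨2, by omega⟩ := by
    rw [← lie_skew, hbr 1 le_rfl (by omega)]
  have hb2 : b ⟨2, by omega⟩ ∈ I := by
    have h3 : ⁅b ⟨1, by omega⟩, y⁆ ∈ I := I.lie_mem hy
    have h4 : (-a⁻¹) • ⁅b ⟨1, by omega⟩, y⁆ ∈ I := SMulMemClass.smul_mem _ h3
    have h5 : (-a⁻¹) • ⁅b ⟨1, by omega⟩, y⁆ = b ⟨2, by omega⟩ := by
      rw [hb1y, hb10, smul_smul]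
      field_simp
      simp
    rwa [h5] at h4
  have chain : ∀ j : ℕ, 2 ≤ j → ∀ hj : j ≤ c, b ⟨j, by omega⟩ ∈ I := by
    intro j hj2
    induction j, hj2 using Nat.le_induction with
    | base => intro _; exact hb2
    | succ j hj2 ih =>
      intro hj
      have hbj : b ⟨j, by omega⟩ ∈ I := ih (by omega)
      have := I.lie_mem hbj (x := b ⟨0, Nat.succ_pos c⟩)
      rwa [hbr j (by omega) (by omega)] at this
  have hSS2 : SS b 2 ≤ I.toSubmodule := by
    rw [SS]
    refine Submodule.span_le.mpr ?_
    rintro _ ⟨j, hj, rfl⟩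
    exact chain (j:ℕ) hj (by omega)
  refine ⟨hSS2, ?_⟩
  have hynot : y ∉ SS b 2 := fun hmem => h0 ((mem_SS b).mp hmem ⟨0, Nat.succ_pos c⟩ (by norm_num))
  have hlt : SS b 2 < SS b 2 ⊔ Submodule.span (ZMod p) {y} := by
    refine lt_of_le_of_ne le_sup_left fun he => hynot ?_
    rw [he]
    exact Submodule.mem_sup_right (Submodule.mem_span_singleton_self y)
  have hle2 : SS b 2 ⊔ Submodule.span (ZMod p) {y} ≤ I.toSubmodule :=
    sup_le hSS2 ((Submodule.span_singleton_le_iff_mem _ _).mpr hy)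
  have h6 := Submodule.finrank_lt_finrank_of_lt hlt
  have h7 := Submodule.finrank_mono hle2
  have h8 : finrank (ZMod p) (SS b 2) = c + 1 - 2 := finrank_SS b (by omega)
  have h9 : finrank (ZMod p) I = finrank (ZMod p) I.toSubmodule := rfl
  omega


include hc hbr h0c in
lemma coord_pow (d j : ℕ) (hj1 : 1 ≤ j) (hjd : j + d ≤ c) (y : L) :
    b.repr ((ad0 b ^ d) y) ⟨j+d, by omega⟩ = b.repr y ⟨j, by omega⟩ := by
  have key : (b.coord ⟨j+d, by omega⟩).comp (ad0 b ^ d) = b.coord ⟨j, by omega⟩ := by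
    apply b.ext
    intro i
    simp only [LinearMap.comp_apply, Basis.coord_apply]
    rcases Nat.eq_zero_or_pos (i:ℕ) with hi | hi
    · have hi0 : i = ⟨0, Nat.succ_pos c⟩ := Fin.ext (show (i:ℕ) = 0 from hi)
      rw [hi0]
      rcases Nat.eq_zero_or_pos d with hd | hd
      · subst hd
        rw [pow_zero, Module.End.one_apply, Basis.repr_self]
        rw [Finsupp.single_apply, Finsupp.single_apply]
        rw [if_neg (by simp [Fin.ext_iff]; omega), if_neg (by simp [Fin.ext_iff]; omega)]
      · rw [pow_ad_zero b hc hbr h0c d hd, map_zero, Finsupp.coe_zero, Pi.zero_apply,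
          Basis.repr_self, Finsupp.single_apply, if_neg (by simp [Fin.ext_iff]; omega)]
    · rw [pow_ad b hc hbr h0c d i hi]
      by_cases hidc : (i:ℕ)+d ≤ c
      · rw [dif_pos hidc, Basis.repr_self, Basis.repr_self]
        rw [Finsupp.single_apply, Finsupp.single_apply]
        simp only [Fin.ext_iff, Fin.val_mk]
        split_ifs <;> first | rfl | (exfalso; omega)
      · rw [dif_neg hidc, map_zero, Finsupp.coe_zero, Pi.zero_apply,
          Basis.repr_self, Finsupp.single_apply,
          if_neg (by simp [Fin.ext_iff]; omega)]
  exact LinearMap.congr_fun key y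

include hc hbr h0c hz in
lemma key2 (I : LieIdeal (ZMod p) L) (hd : finrank (ZMod p) I ≤ c - 1) :
    I.toSubmodule = SS b (c + 1 - finrank (ZMod p) I) := by
  haveI : FiniteDimensional (ZMod p) L := Module.Finite.of_basis b
  set d := finrank (ZMod p) I with hdd
  have h00 : ∀ y ∈ I, b.repr y ⟨0, Nat.succ_pos c⟩ = 0 := by
    intro y hy
    by_contra h0
    have := (key1 b hc hbr h0c hz I hy h0).2
    omega
  have hNI : ∀ z ∈ I.toSubmodule, (ad0 b) z ∈ I.toSubmodule := fun z hz' => I.lie_mem hz'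
  have hfd : ∀ (z) (hz' : z ∈ I.toSubmodule), ((ad0 b)^d) z = 0 := by
    set f := (ad0 b).restrict hNI with hf
    have hftop : f^(c+1) = 0 := by
      rw [hf, Module.End.pow_restrict]
      apply LinearMap.ext
      rintro ⟨z, hz'⟩
      apply Subtype.ext
      show ((ad0 b)^(c+1)) z = _
      rw [pow_ad_top b hc hbr h0c]
      rfl
    have hker := Module.End.ker_pow_le_ker_pow_finrank f (c+1)
    intro z hz'
    have h1 : (⟨z, hz'⟩ : I.toSubmodule) ∈ LinearMap.ker (f^(c+1)) := by
      rw [hftop]; simp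
    have h2 := hker h1
    rw [LinearMap.mem_ker] at h2
    have h3 : finrank (ZMod p) I.toSubmodule = d := rfl
    rw [h3] at h2
    have h4 := congrArg Subtype.val h2
    rw [hf, Module.End.pow_restrict, LinearMap.restrict_coe_apply] at h4
    exact h4
  have hsub : I.toSubmodule ≤ SS b (c+1-d) := by
    intro y hy
    rw [mem_SS]
    intro i hi
    rcases Nat.eq_zero_or_pos (i:ℕ) with h | h
    · have hi0 : i = ⟨0, Nat.succ_pos c⟩ := Fin.ext (show (i:ℕ) = 0 from h)
      rw [hi0]
      exact h00 y hy
    · have hcp := coord_pow b hc hbr h0c d (i:ℕ) h (by omega) y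
      rw [hfd y hy, map_zero, Finsupp.coe_zero, Pi.zero_apply] at hcp
      have : (⟨(i:ℕ), by omega⟩ : Fin (c+1)) = i := Fin.ext rfl
      rw [this] at hcp
      exact hcp.symm
  refine Submodule.eq_of_le_of_finrank_eq hsub ?_
  rw [finrank_SS b (by omega)]
  have h5 : finrank (ZMod p) I.toSubmodule = d := rfl
  omega


include hc hbr h0c hz in
lemma part2 : Nat.card {I : LieIdeal (ZMod p) L | finrank (ZMod p) I = c} = 1 + p := by
  haveI : FiniteDimensional (ZMod p) L := Module.Finite.of_basis b
  classical
  set v : ZMod p → L := fun t => b ⟨0, Nat.succ_pos c⟩ + t • b ⟨1, by omega⟩ with hv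
  have hrepr0 : ∀ t, b.repr (v t) ⟨0, Nat.succ_pos c⟩ = 1 := by
    intro t
    simp [hv, Basis.repr_self, Finsupp.single_apply, Fin.ext_iff]
  have hrepr1 : ∀ t, b.repr (v t) ⟨1, by omega⟩ = t := by
    intro t
    simp [hv, Basis.repr_self, Finsupp.single_apply, Fin.ext_iff]
  have hvne : ∀ t, v t ≠ 0 := by
    intro t h
    have := hrepr0 t
    rw [h] at this
    simp at this
  set W : ZMod p → Submodule (ZMod p) L :=
    fun t => Submodule.span (ZMod p) {v t} ⊔ SS b 2 with hW
  have hSS2W : ∀ t, SS b 2 ≤ W t := fun t => le_sup_right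
  have hWrank : ∀ t, finrank (ZMod p) (W t) = c := by
    intro t
    have hdisj : Submodule.span (ZMod p) {v t} ⊓ SS b 2 = ⊥ := by
      rw [eq_bot_iff]
      intro z hzmem
      obtain ⟨hz1, hz2⟩ := Submodule.mem_inf.mp hzmem
      obtain ⟨s, rfl⟩ := Submodule.mem_span_singleton.mp hz1
      have h0 := (mem_SS b).mp hz2 ⟨0, Nat.succ_pos c⟩ (by norm_num)
      rw [map_smul, Finsupp.smul_apply, hrepr0 t, smul_eq_mul, mul_one] at h0
      rw [h0, zero_smul]
      exact Submodule.zero_mem _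
    have hsum := Submodule.finrank_sup_add_finrank_inf_eq
      (Submodule.span (ZMod p) {v t}) (SS b 2)
    rw [hdisj, finrank_bot, finrank_span_singleton (hvne t), finrank_SS b (by omega)] at hsum
    show finrank (ZMod p) ↥(Submodule.span (ZMod p) {v t} ⊔ SS b 2) = c
    omega
  obtain ⟨J1, hJ1⟩ := exists_JJ b hc hbr h0c hz 1 le_rfl
  have hGex : ∀ t, ∃ I : LieIdeal (ZMod p) L, I.toSubmodule = W t := fun t =>
    exists_ideal_of_SS2_le b hc hbr h0c hz (hSS2W t)
  choose G hGt using hGex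
  have hJ1rank : finrank (ZMod p) J1 = c := by
    have h1 : finrank (ZMod p) J1.toSubmodule = finrank (ZMod p) (SS b 1) := by rw [hJ1]
    rw [finrank_SS b (by omega)] at h1
    have h2 : finrank (ZMod p) J1 = finrank (ZMod p) J1.toSubmodule := rfl
    omega
  have hGrank : ∀ t, finrank (ZMod p) (G t) = c := by
    intro t
    have h1 : finrank (ZMod p) (G t).toSubmodule = finrank (ZMod p) (W t) := by rw [hGt]
    rw [hWrank t] at h1
    exact h1
  set A := {I : LieIdeal (ZMod p) L | finrank (ZMod p) I = c} with hA
  set F : Option (ZMod p) → A :=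
    fun o => o.elim ⟨J1, hJ1rank⟩ (fun t => ⟨G t, hGrank t⟩) with hF
  have hvW : ∀ t, v t ∈ W t := fun t =>
    Submodule.mem_sup_left (Submodule.mem_span_singleton_self _)
  have hWinj : ∀ t t', v t ∈ W t' → t = t' := by
    intro t t' hmem
    obtain ⟨u, hu, w, hw, huw⟩ := Submodule.mem_sup.mp hmem
    obtain ⟨s, rfl⟩ := Submodule.mem_span_singleton.mp hu
    have e0 := congrArg (fun z : L => b.repr z ⟨0, Nat.succ_pos c⟩) huw
    simp only [map_add, map_smul, Finsupp.add_apply, Finsupp.smul_apply, smul_eq_mul] at e0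
    rw [hrepr0 t, hrepr0 t', (mem_SS b).mp hw ⟨0, Nat.succ_pos c⟩ (by norm_num)] at e0
    have e1 := congrArg (fun z : L => b.repr z ⟨1, by omega⟩) huw
    simp only [map_add, map_smul, Finsupp.add_apply, Finsupp.smul_apply, smul_eq_mul] at e1
    rw [hrepr1 t, hrepr1 t', (mem_SS b).mp hw ⟨1, by omega⟩ (by norm_num)] at e1
    rw [mul_one, add_zero] at e0
    rw [add_zero] at e1
    rw [e0, one_mul] at e1
    exact e1.symm
  have hJ1G : ∀ t, J1 ≠ G t := by
    intro t h
    have hsub : (SS b 1 : Submodule (ZMod p) L) = W t := by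
      rw [← hJ1, h, hGt]
    have : v t ∈ SS b 1 := by rw [hsub]; exact hvW t
    have h0 := (mem_SS b).mp this ⟨0, Nat.succ_pos c⟩ (by norm_num)
    rw [hrepr0 t] at h0
    exact one_ne_zero h0
  have hinj : Function.Injective F := by
    intro o o' h
    have h' : (F o : LieIdeal (ZMod p) L) = F o' := congrArg Subtype.val h
    match o, o' with
    | none, none => rfl
    | none, some t => exact absurd (show J1 = G t from h') (hJ1G t)
    | some t, none => exact absurd (show G t = J1 from h').symm (hJ1G t)
    | some t, some t' =>
      have h'' : G t = G t' := h'
      have hWW : W t = W t' := by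
        rw [← hGt t, ← hGt t', h'']
      have := hWinj t t' (hWW ▸ hvW t)
      rw [this]
  have hsurj : Function.Surjective F := by
    rintro ⟨I, hI⟩
    have hIc : finrank (ZMod p) I = c := hI
    by_cases hex : ∃ y ∈ I, b.repr y ⟨0, Nat.succ_pos c⟩ ≠ 0
    · obtain ⟨y, hy, h0⟩ := hex
      obtain ⟨hSS2I, -⟩ := key1 b hc hbr h0c hz I hy h0
      set a := b.repr y ⟨0, Nat.succ_pos c⟩ with hadef
      set t := a⁻¹ * b.repr y ⟨1, by omega⟩ with htdef
      have hw : a⁻¹ • y - v t ∈ SS b 2 := by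
        rw [mem_SS]
        intro i hi
        rw [map_sub, map_smul, Finsupp.sub_apply, Finsupp.smul_apply, smul_eq_mul]
        rcases (show (i:ℕ) = 0 ∨ (i:ℕ) = 1 by omega) with h' | h'
        · have : i = ⟨0, Nat.succ_pos c⟩ := Fin.ext h'
          rw [this, hrepr0 t, ← hadef, inv_mul_cancel₀ h0, sub_self]
        · have : i = ⟨1, by omega⟩ := Fin.ext h'
          rw [this, hrepr1 t, htdef, sub_self]
      have hvtI : v t ∈ I := by
        have heq : v t = a⁻¹ • y - (a⁻¹ • y - v t) := by abel
        rw [heq]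
        exact sub_mem (SMulMemClass.smul_mem _ hy) (hSS2I hw)
      have hle : W t ≤ I.toSubmodule :=
        sup_le ((Submodule.span_singleton_le_iff_mem _ _).mpr hvtI) hSS2I
      have heqW : W t = I.toSubmodule :=
        Submodule.eq_of_le_of_finrank_eq hle (by rw [hWrank t]; exact hIc.symm)
      refine ⟨some t, ?_⟩
      apply Subtype.ext
      show G t = I
      apply LieSubmodule.toSubmodule_injective
      rw [hGt t, heqW]
    · push_neg at hex
      have hle : I.toSubmodule ≤ SS b 1 := by
        intro y hy
        rw [mem_SS]
        intro i hi
        have : i = ⟨0, Nat.succ_pos c⟩ := Fin.ext (show (i:ℕ) = 0 by omega)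
        rw [this]
        exact hex y hy
      have heq : I.toSubmodule = SS b 1 :=
        Submodule.eq_of_le_of_finrank_eq hle
          (by rw [finrank_SS b (by omega), show finrank (ZMod p) I.toSubmodule = c from hIc]; omega)
      refine ⟨none, ?_⟩
      apply Subtype.ext
      show J1 = I
      apply LieSubmodule.toSubmodule_injective
      rw [hJ1, heq]
  have hcard := Nat.card_eq_of_bijective F ⟨hinj, hsurj⟩
  rw [hA] at hcard
  rw [← hcard]
  haveI : NeZero p := ⟨(Fact.out : p.Prime).ne_zero⟩
  rw [Nat.card_eq_fintype_card, Fintype.card_option, ZMod.card]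
  omega


include b in
lemma part1 : Nat.card {I : LieIdeal (ZMod p) L | finrank (ZMod p) I = c+1} = 1 := by
  haveI : FiniteDimensional (ZMod p) L := Module.Finite.of_basis b
  have hL : finrank (ZMod p) L = c + 1 := by
    rw [finrank_eq_card_basis b, Fintype.card_fin]
  have hset : {I : LieIdeal (ZMod p) L | finrank (ZMod p) I = c+1} = {⊤} := by
    ext I
    simp only [Set.mem_setOf_eq, Set.mem_singleton_iff]
    constructor
    · intro hI
      apply LieSubmodule.toSubmodule_injective
      rw [LieSubmodule.top_toSubmodule]
      apply Submodule.eq_top_of_finrank_eq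
      rw [hL]
      exact hI
    · rintro rfl
      have h2 : finrank (ZMod p) (⊤ : LieIdeal (ZMod p) L) =
          finrank (ZMod p) (⊤ : Submodule (ZMod p) L) := by congr 1
      rw [h2, finrank_top, hL]
  rw [hset]
  exact Nat.card_unique

include hc hbr h0c hz in
lemma part3 (k : ℕ) (hk2 : 2 ≤ k) (hk : k ≤ c+1) :
    Nat.card {I : LieIdeal (ZMod p) L | finrank (ZMod p) I = c+1-k} = 1 := by
  haveI : FiniteDimensional (ZMod p) L := Module.Finite.of_basis b
  obtain ⟨J, hJ⟩ := exists_JJ b hc hbr h0c hz k (by omega)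
  have hJrank : finrank (ZMod p) J = c+1-k := by
    have h1 : finrank (ZMod p) J.toSubmodule = finrank (ZMod p) (SS b k) := by rw [hJ]
    rw [finrank_SS b hk] at h1
    exact h1
  have hset : {I : LieIdeal (ZMod p) L | finrank (ZMod p) I = c+1-k} = {J} := by
    ext I
    simp only [Set.mem_setOf_eq, Set.mem_singleton_iff]
    constructor
    · intro hI
      apply LieSubmodule.toSubmodule_injective
      have h2 := key2 b hc hbr h0c hz I (by rw [hI]; omega)
      rw [hI] at h2
      rw [h2, hJ]
      congr 1
      omega
    · rintro rfl
      exact hJrank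
  rw [hset]
  exact Nat.card_unique

end Aux

/-- For the maximal class-`c` Lie algebra `M_c` over `F_p` (`c ≥ 2`), with basis
`x_0,…,x_c` and brackets `[x_0,x_i] = x_{i+1}` for `1 ≤ i ≤ c-1` (all other basis
brackets zero), the number of ideals of codimension `k` is `1` for `k = 0`,
`1 + p` for `k = 1`, and `1` for each `2 ≤ k ≤ c + 1`. -/
theorem maximal_class_ideal_count (p c : ℕ) [Fact p.Prime] (hc : 2 ≤ c)
    (L : Type*) [LieRing L] [LieAlgebra (ZMod p) L]
    (b : Basis (Fin (c + 1)) (ZMod p) L)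
    (hbr : ∀ (i : ℕ) (h1 : 1 ≤ i) (h2 : i ≤ c - 1),
      ⁅b ⟨0, by omega⟩, b ⟨i, by omega⟩⁆ = b ⟨i + 1, by omega⟩)
    (h0c : ⁅b ⟨0, by omega⟩, b ⟨c, by omega⟩⁆ = 0)
    (hz : ∀ i j : Fin (c + 1), 1 ≤ (i : ℕ) → 1 ≤ (j : ℕ) → ⁅b i, b j⁆ = 0) :
    Nat.card {I : LieIdeal (ZMod p) L | finrank (ZMod p) I = c + 1} = 1 ∧
    Nat.card {I : LieIdeal (ZMod p) L | finrank (ZMod p) I = c} = 1 + p ∧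
    (∀ k : ℕ, 2 ≤ k → k ≤ c + 1 →
      Nat.card {I : LieIdeal (ZMod p) L | finrank (ZMod p) I = c + 1 - k} = 1) := by
  refine ⟨part1 b, part2 b hc hbr h0c hz, fun k hk2 hk => part3 b hc hbr h0c hz k hk2 hk⟩
end

section
/- The Lie algebra sl_2(F_p) = ⟨e, f, h : [h,e]=2e, [h,f]=−2f, [e,f]=h⟩ has exactly 1+p subalgebras of codimension 1, exactly 1+p+p^2 subalgebras of codimension 2 (i.e., every 1-dimensional subspace is a subalgebra), the zero subalgebra, and the whole algebra; so its subalgebra zeta polynomial is 1 + (1+p)t + (1+p+p^2)t^2 + t^3. -/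
open Module

set_option maxHeartbeats 1000000


section
variable {p : ℕ} [Fact p.Prime] {L : Type*} [LieRing L] [LieAlgebra (ZMod p) L]
  (b : Basis (Fin 3) (ZMod p) L)

lemma repr_combo (x y z : ZMod p) (i : Fin 3) :
    b.repr (x • b 0 + y • b 1 + z • b 2) i = ![x, y, z] i := by
  fin_cases i <;> simp [Finsupp.single_apply]

lemma combo_eq_zero_iff {x y z : ZMod p} :
    x • b 0 + y • b 1 + z • b 2 = 0 ↔ x = 0 ∧ y = 0 ∧ z = 0 := by
  constructor
  · intro hxyz
    have h0 := congrArg (fun w => b.repr w 0) hxyz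
    have h1 := congrArg (fun w => b.repr w 1) hxyz
    have h2 := congrArg (fun w => b.repr w 2) hxyz
    simp only [repr_combo] at h0 h1 h2
    simp only [Matrix.cons_val_zero, Matrix.cons_val_one, Matrix.head_cons, map_zero,
      Finsupp.coe_zero, Pi.zero_apply] at h0 h1 h2
    exact ⟨h0, h1, h2⟩
  · rintro ⟨rfl, rfl, rfl⟩; simp

lemma repr_sum (v : L) : b.repr v 0 • b 0 + b.repr v 1 • b 1 + b.repr v 2 • b 2 = v := by
  have := b.sum_repr v
  rwa [Fin.sum_univ_three] at this

end

section
variable {p : ℕ} [Fact p.Prime] {L : Type*} [LieRing L] [LieAlgebra (ZMod p) L]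
  (b : Basis (Fin 3) (ZMod p) L)
  (hhe : ⁅b 2, b 0⁆ = (2 : ZMod p) • b 0)
  (hhf : ⁅b 2, b 1⁆ = -((2 : ZMod p) • b 1))
  (hef : ⁅b 0, b 1⁆ = b 2)

include hhe hhf hef in
lemma lie_combo (x y z x' y' z' : ZMod p) :
    ⁅x • b 0 + y • b 1 + z • b 2, x' • b 0 + y' • b 1 + z' • b 2⁆ =
      (2 * (z * x' - z' * x)) • b 0 + (-(2 * (z * y' - z' * y))) • b 1
        + (x * y' - x' * y) • b 2 := by
  have h1 : ⁅b 0, b 2⁆ = -((2 : ZMod p) • b 0) := by rw [← lie_skew, hhe]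
  have h2 : ⁅b 1, b 2⁆ = (2 : ZMod p) • b 1 := by rw [← lie_skew, hhf]; simp
  have h3 : ⁅b 1, b 0⁆ = -(b 2) := by rw [← lie_skew, hef]
  simp only [add_lie, lie_add, smul_lie, lie_smul, lie_self, hhe, hhf, hef, h1, h2, h3,
    smul_zero, smul_neg, smul_smul]
  module

end

section
variable {p : ℕ} [Fact p.Prime] {L : Type*} [LieRing L] [LieAlgebra (ZMod p) L]
  (b : Basis (Fin 3) (ZMod p) L)

lemma indep_of_det {u v : L} (i j : Fin 3)
    (h : b.repr u i * b.repr v j - b.repr u j * b.repr v i ≠ 0) :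
    LinearIndependent (ZMod p) ![u, v] := by
  rw [LinearIndependent.pair_iff]
  intro s t hst
  have hi := congrArg (fun w => b.repr w i) hst
  have hj := congrArg (fun w => b.repr w j) hst
  simp only [map_add, map_smul, Finsupp.coe_add, Finsupp.coe_smul, Pi.add_apply,
    Pi.smul_apply, smul_eq_mul, map_zero, Finsupp.coe_zero, Pi.zero_apply] at hi hj
  constructor
  · have : s * (b.repr u i * b.repr v j - b.repr u j * b.repr v i) = 0 := by
      linear_combination b.repr v j * hi - b.repr v i * hj
    exact (mul_eq_zero.mp this).resolve_right h
  · have : t * (b.repr u i * b.repr v j - b.repr u j * b.repr v i) = 0 := by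
      linear_combination b.repr u i * hj - b.repr u j * hi
    exact (mul_eq_zero.mp this).resolve_right h

lemma finrank_span_pair {u v : L} (h : LinearIndependent (ZMod p) ![u, v]) :
    finrank (ZMod p) (Submodule.span (ZMod p) {u, v}) = 2 := by
  have := finrank_span_eq_card h
  rw [show Set.range ![u, v] = {u, v} by
    simp [Matrix.range_cons, Matrix.range_empty, Set.pair_comm]] at this
  simpa using this

end

section
variable {p : ℕ} [Fact p.Prime] {L : Type*} [LieRing L] [LieAlgebra (ZMod p) L]
  (b : Basis (Fin 3) (ZMod p) L)

lemma finrank_coe (S : LieSubalgebra (ZMod p) L) :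
    finrank (ZMod p) S = finrank (ZMod p) S.toSubmodule := rfl

include b in
lemma count3 : {S : LieSubalgebra (ZMod p) L | finrank (ZMod p) S = 3} = {⊤} := by
  have : FiniteDimensional (ZMod p) L := Module.Finite.of_basis b
  have hL : finrank (ZMod p) L = 3 := by
    rw [finrank_eq_card_basis b]; simp
  ext S
  simp only [Set.mem_setOf_eq, Set.mem_singleton_iff]
  constructor
  · intro h
    apply LieSubalgebra.toSubmodule_injective
    rw [LieSubalgebra.top_toSubmodule]
    exact Submodule.eq_top_of_finrank_eq (by rw [← finrank_coe, h, hL])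
  · rintro rfl
    rw [finrank_coe, LieSubalgebra.top_toSubmodule, finrank_top, hL]

include b in
lemma count0 : {S : LieSubalgebra (ZMod p) L | finrank (ZMod p) S = 0} = {⊥} := by
  have : FiniteDimensional (ZMod p) L := Module.Finite.of_basis b
  ext S
  simp only [Set.mem_setOf_eq, Set.mem_singleton_iff]
  constructor
  · intro h
    apply LieSubalgebra.toSubmodule_injective
    rw [LieSubalgebra.bot_toSubmodule]
    exact Submodule.finrank_eq_zero.mp (by rw [← finrank_coe, h])
  · rintro rfl
    rw [finrank_coe, LieSubalgebra.bot_toSubmodule]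
    simp

end

section
variable {p : ℕ} [Fact p.Prime] {L : Type*} [LieRing L] [LieAlgebra (ZMod p) L]
  (b : Basis (Fin 3) (ZMod p) L)

/-- span of a single vector is a Lie subalgebra -/
def singSub (v : L) : LieSubalgebra (ZMod p) L where
  __ := Submodule.span (ZMod p) {v}
  lie_mem' := by
    intro x y hx hy
    have hx' : x ∈ Submodule.span (ZMod p) {v} := hx
    have hy' : y ∈ Submodule.span (ZMod p) {v} := hy
    rw [Submodule.mem_span_singleton] at hx' hy'
    obtain ⟨a, rfl⟩ := hx'
    obtain ⟨c, rfl⟩ := hy'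
    show _ ∈ Submodule.span (ZMod p) {v}
    rw [Submodule.mem_span_singleton]
    exact ⟨0, by simp [lie_smul, smul_lie]⟩

@[simp] lemma singSub_toSubmodule (v : L) :
    (singSub v : LieSubalgebra (ZMod p) L).toSubmodule = Submodule.span (ZMod p) {v} := rfl

noncomputable def lineMap : (ZMod p × ZMod p) ⊕ (ZMod p ⊕ Unit) → LieSubalgebra (ZMod p) L
  | .inl (s, t) => singSub ((1 : ZMod p) • b 0 + s • b 1 + t • b 2)
  | .inr (.inl t) => singSub ((0 : ZMod p) • b 0 + (1 : ZMod p) • b 1 + t • b 2)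
  | .inr (.inr _) => singSub ((0 : ZMod p) • b 0 + (0 : ZMod p) • b 1 + (1 : ZMod p) • b 2)

lemma key_spans {x y z x' y' z' : ZMod p}
    (h : (Submodule.span (ZMod p) {x • b 0 + y • b 1 + z • b 2} : Submodule (ZMod p) L) =
      Submodule.span (ZMod p) {x' • b 0 + y' • b 1 + z' • b 2}) :
    ∃ c : ZMod p, x = c * x' ∧ y = c * y' ∧ z = c * z' := by
  have hx : x • b 0 + y • b 1 + z • b 2 ∈
      Submodule.span (ZMod p) {x' • b 0 + y' • b 1 + z' • b 2} := by
    rw [← h]; exact Submodule.mem_span_singleton_self _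
  rw [Submodule.mem_span_singleton] at hx
  obtain ⟨c, hc⟩ := hx
  have h0 := congrArg (fun w => b.repr w 0) hc
  have h1 := congrArg (fun w => b.repr w 1) hc
  have h2 := congrArg (fun w => b.repr w 2) hc
  simp only [map_smul, repr_combo, Finsupp.coe_smul, Pi.smul_apply, smul_eq_mul,
    Matrix.cons_val_zero, Matrix.cons_val_one, Matrix.head_cons] at h0 h1 h2
  exact ⟨c, h0.symm, h1.symm, by
    have := h2
    simpa using this.symm⟩

lemma lineMap_injective : Function.Injective (lineMap b) := by
  have key : ∀ {x y z x' y' z' : ZMod p},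
      (singSub (x • b 0 + y • b 1 + z • b 2) : LieSubalgebra (ZMod p) L) =
        singSub (x' • b 0 + y' • b 1 + z' • b 2) →
      ∃ c : ZMod p, x = c * x' ∧ y = c * y' ∧ z = c * z' := by
    intro x y z x' y' z' h
    exact key_spans b (congrArg LieSubalgebra.toSubmodule h)
  rintro (⟨s, t⟩ | (t | ⟨⟩)) (⟨s', t'⟩ | (t' | ⟨⟩)) h <;>
    obtain ⟨c, hc1, hc2, hc3⟩ := key h
  · obtain rfl : c = 1 := by rw [mul_one] at hc1; exact hc1.symm
    simp only [one_mul] at hc2 hc3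
    rw [hc2, hc3]
  · exact absurd (show (1 : ZMod p) = 0 by linear_combination hc1) one_ne_zero
  · exact absurd (show (1 : ZMod p) = 0 by linear_combination hc1) one_ne_zero
  · exact absurd (show (1 : ZMod p) = 0 by linear_combination hc2 - s' * hc1) one_ne_zero
  · obtain rfl : c = 1 := by rw [mul_one] at hc2; exact hc2.symm
    simp only [one_mul] at hc3
    rw [hc3]
  · exact absurd (show (1 : ZMod p) = 0 by linear_combination hc2) one_ne_zero
  · exact absurd (show (1 : ZMod p) = 0 by linear_combination hc3 - t' * hc1) one_ne_zero
  · exact absurd (show (1 : ZMod p) = 0 by linear_combination hc3 - t' * hc2) one_ne_zero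
  · rfl

end

section
variable {p : ℕ} [Fact p.Prime] {L : Type*} [LieRing L] [LieAlgebra (ZMod p) L]
  (b : Basis (Fin 3) (ZMod p) L)

include b in
lemma count1 : {S : LieSubalgebra (ZMod p) L | finrank (ZMod p) S = 1}
    = Set.range (lineMap b) := by
  have : FiniteDimensional (ZMod p) L := Module.Finite.of_basis b
  ext S
  simp only [Set.mem_setOf_eq, Set.mem_range]
  constructor
  · intro hS
    -- find a nonzero element
    have hne : S.toSubmodule ≠ ⊥ := by
      intro hbot
      rw [finrank_coe, hbot] at hS
      simp at hS
    obtain ⟨v, hvS, hv0⟩ := Submodule.exists_mem_ne_zero_of_ne_bot hne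
    have hspan : S.toSubmodule = Submodule.span (ZMod p) {v} := by
      refine (Submodule.eq_of_le_of_finrank_eq ?_ ?_).symm
      · rwa [Submodule.span_singleton_le_iff_mem]
      · rw [finrank_span_singleton hv0, ← finrank_coe, hS]
    set a := b.repr v 0 with ha_def
    set c1 := b.repr v 1 with hc1_def
    set c2 := b.repr v 2 with hc2_def
    have hv : a • b 0 + c1 • b 1 + c2 • b 2 = v := repr_sum b v
    by_cases ha : a ≠ 0
    · refine ⟨.inl (a⁻¹ * c1, a⁻¹ * c2), ?_⟩
      apply LieSubalgebra.toSubmodule_injective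
      show Submodule.span (ZMod p) _ = _
      have e1 : (1 : ZMod p) • b 0 + (a⁻¹ * c1) • b 1 + (a⁻¹ * c2) • b 2 = a⁻¹ • v := by
        rw [← hv]
        match_scalars <;> field_simp
      rw [e1, Submodule.span_singleton_smul_eq (by simp [isUnit_iff_ne_zero, ha] : IsUnit a⁻¹),
        hspan]
    · push_neg at ha
      by_cases hc1 : c1 ≠ 0
      · refine ⟨.inr (.inl (c1⁻¹ * c2)), ?_⟩
        apply LieSubalgebra.toSubmodule_injective
        show Submodule.span (ZMod p) _ = _
        have e1 : (0 : ZMod p) • b 0 + (1 : ZMod p) • b 1 + (c1⁻¹ * c2) • b 2 = c1⁻¹ • v := by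
          rw [← hv, ha]
          match_scalars <;> field_simp <;> simp
        rw [e1, Submodule.span_singleton_smul_eq
          (by simp [isUnit_iff_ne_zero, hc1] : IsUnit c1⁻¹), hspan]
      · push_neg at hc1
        have hc2 : c2 ≠ 0 := by
          intro hc2
          apply hv0
          rw [← hv, ha, hc1, hc2]
          simp
        refine ⟨.inr (.inr ()), ?_⟩
        apply LieSubalgebra.toSubmodule_injective
        show Submodule.span (ZMod p) _ = _
        have e1 : (0 : ZMod p) • b 0 + (0 : ZMod p) • b 1 + (1 : ZMod p) • b 2 = c2⁻¹ • v := by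
          rw [← hv, ha, hc1]
          match_scalars <;> field_simp <;> simp
        rw [e1, Submodule.span_singleton_smul_eq
          (by simp [isUnit_iff_ne_zero, hc2] : IsUnit c2⁻¹), hspan]
  · rintro ⟨w, rfl⟩
    have hfr : ∀ x y z : ZMod p, (x, y, z) ≠ (0, 0, 0) →
        finrank (ZMod p) (singSub (x • b 0 + y • b 1 + z • b 2) : LieSubalgebra (ZMod p) L)
          = 1 := by
      intro x y z hxyz
      rw [finrank_coe, singSub_toSubmodule, finrank_span_singleton]
      intro h0
      rw [combo_eq_zero_iff b] at h0
      exact hxyz (by simp [h0.1, h0.2.1, h0.2.2])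
    rcases w with ⟨s, t⟩ | (t | ⟨⟩) <;>
      exact hfr _ _ _ (by simp)

end

section
variable {p : ℕ} [Fact p.Prime] {L : Type*} [LieRing L] [LieAlgebra (ZMod p) L]
  (b : Basis (Fin 3) (ZMod p) L)

def pairSub (u v : L) (h : ⁅u, v⁆ ∈ Submodule.span (ZMod p) {u, v}) :
    LieSubalgebra (ZMod p) L where
  __ := Submodule.span (ZMod p) {u, v}
  lie_mem' := by
    intro x y hx hy
    have hx' : x ∈ Submodule.span (ZMod p) {u, v} := hx
    have hy' : y ∈ Submodule.span (ZMod p) {u, v} := hy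
    rw [Submodule.mem_span_pair] at hx' hy'
    obtain ⟨a, c, rfl⟩ := hx'
    obtain ⟨a', c', rfl⟩ := hy'
    show _ ∈ Submodule.span (ZMod p) {u, v}
    have hvu : ⁅v, u⁆ = -⁅u, v⁆ := (lie_skew u v).symm ▸ by simp
    have key : ⁅a • u + c • v, a' • u + c' • v⁆ = (a * c' - a' * c) • ⁅u, v⁆ := by
      simp only [add_lie, lie_add, smul_lie, lie_smul, lie_self, smul_zero, hvu, smul_neg,
        smul_smul]
      module
    rw [key]
    exact Submodule.smul_mem _ _ h

@[simp] lemma pairSub_toSubmodule (u v : L) (h) :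
    (pairSub u v h : LieSubalgebra (ZMod p) L).toSubmodule
      = Submodule.span (ZMod p) {u, v} := rfl

lemma mem_pair_coords {x y z x' y' z' x'' y'' z'' : ZMod p}
    (hx : x • b 0 + y • b 1 + z • b 2 ∈ Submodule.span (ZMod p)
      ({x' • b 0 + y' • b 1 + z' • b 2, x'' • b 0 + y'' • b 1 + z'' • b 2} : Set L)) :
    ∃ a c : ZMod p, x = a * x' + c * x'' ∧ y = a * y' + c * y'' ∧ z = a * z' + c * z'' := by
  rw [Submodule.mem_span_pair] at hx
  obtain ⟨a, c, hc⟩ := hx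
  have h0 := congrArg (fun w => b.repr w 0) hc
  have h1 := congrArg (fun w => b.repr w 1) hc
  have h2 := congrArg (fun w => b.repr w 2) hc
  simp only [map_add, map_smul, Finsupp.coe_add, Finsupp.coe_smul, Pi.add_apply,
    Pi.smul_apply, smul_eq_mul] at h0 h1 h2
  simp [Finsupp.single_apply] at h0 h1 h2
  exact ⟨a, c, h0.symm, h1.symm, h2.symm⟩

end

section
variable {p : ℕ} [Fact p.Prime] {L : Type*} [LieRing L] [LieAlgebra (ZMod p) L]
  (b : Basis (Fin 3) (ZMod p) L)
  (hhe : ⁅b 2, b 0⁆ = (2 : ZMod p) • b 0)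
  (hhf : ⁅b 2, b 1⁆ = -((2 : ZMod p) • b 1))
  (hef : ⁅b 0, b 1⁆ = b 2)

noncomputable def BMap : Option (ZMod p) → LieSubalgebra (ZMod p) L
  | none => pairSub ((0 : ZMod p) • b 0 + (1 : ZMod p) • b 1 + (0 : ZMod p) • b 2)
      ((0 : ZMod p) • b 0 + (0 : ZMod p) • b 1 + (1 : ZMod p) • b 2)
      (by
        rw [lie_combo b hhe hhf hef, Submodule.mem_span_pair]
        exact ⟨2, 0, by module⟩)
  | some t => pairSub ((1 : ZMod p) • b 0 + (t ^ 2) • b 1 + (0 : ZMod p) • b 2)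
      ((0 : ZMod p) • b 0 + (2 * t) • b 1 + (1 : ZMod p) • b 2)
      (by
        rw [lie_combo b hhe hhf hef, Submodule.mem_span_pair]
        refine ⟨-2, 2 * t, by match_scalars <;> ring⟩)

lemma BMap_finrank (w : Option (ZMod p)) :
    finrank (ZMod p) (BMap b hhe hhf hef w : LieSubalgebra (ZMod p) L) = 2 := by
  cases w with
  | none =>
    rw [finrank_coe]
    show finrank (ZMod p) (Submodule.span (ZMod p) _) = 2
    apply finrank_span_pair
    apply indep_of_det b 1 2
    simp only [map_add, map_smul, Finsupp.coe_add, Finsupp.coe_smul, Pi.add_apply,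
      Pi.smul_apply, smul_eq_mul]
    simp [Finsupp.single_apply]
  | some t =>
    rw [finrank_coe]
    show finrank (ZMod p) (Submodule.span (ZMod p) _) = 2
    apply finrank_span_pair
    apply indep_of_det b 0 2
    simp only [map_add, map_smul, Finsupp.coe_add, Finsupp.coe_smul, Pi.add_apply,
      Pi.smul_apply, smul_eq_mul]
    simp [Finsupp.single_apply]

lemma BMap_injective : Function.Injective (BMap b hhe hhf hef) := by
  intro w w' h
  have h' := congrArg LieSubalgebra.toSubmodule h
  cases w with
  | none => cases w' with
    | none => rfl
    | some s =>
      exfalso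
      simp only [BMap, pairSub_toSubmodule] at h'
      have : (1 : ZMod p) • b 0 + (s ^ 2) • b 1 + (0 : ZMod p) • b 2 ∈
          Submodule.span (ZMod p) ({(0 : ZMod p) • b 0 + (1 : ZMod p) • b 1 + (0 : ZMod p) • b 2,
            (0 : ZMod p) • b 0 + (0 : ZMod p) • b 1 + (1 : ZMod p) • b 2} : Set L) := by
        rw [h']
        exact Submodule.subset_span (by simp)
      obtain ⟨a, c, h1, h2, h3⟩ := mem_pair_coords b this
      exact one_ne_zero (by linear_combination h1)
  | some t => cases w' with
    | none =>
      exfalso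
      simp only [BMap, pairSub_toSubmodule] at h'
      have : (1 : ZMod p) • b 0 + (t ^ 2) • b 1 + (0 : ZMod p) • b 2 ∈
          Submodule.span (ZMod p) ({(0 : ZMod p) • b 0 + (1 : ZMod p) • b 1 + (0 : ZMod p) • b 2,
            (0 : ZMod p) • b 0 + (0 : ZMod p) • b 1 + (1 : ZMod p) • b 2} : Set L) := by
        rw [← h']
        exact Submodule.subset_span (by simp)
      obtain ⟨a, c, h1, h2, h3⟩ := mem_pair_coords b this
      exact one_ne_zero (by linear_combination h1)
    | some s =>
      simp only [BMap, pairSub_toSubmodule] at h'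
      have hu : (1 : ZMod p) • b 0 + (t ^ 2) • b 1 + (0 : ZMod p) • b 2 ∈
          Submodule.span (ZMod p) ({(1 : ZMod p) • b 0 + (s ^ 2) • b 1 + (0 : ZMod p) • b 2,
            (0 : ZMod p) • b 0 + (2 * s) • b 1 + (1 : ZMod p) • b 2} : Set L) := by
        rw [← h']
        exact Submodule.subset_span (by simp)
      have hv : (0 : ZMod p) • b 0 + (2 * t) • b 1 + (1 : ZMod p) • b 2 ∈
          Submodule.span (ZMod p) ({(1 : ZMod p) • b 0 + (s ^ 2) • b 1 + (0 : ZMod p) • b 2,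
            (0 : ZMod p) • b 0 + (2 * s) • b 1 + (1 : ZMod p) • b 2} : Set L) := by
        rw [← h']
        exact Submodule.subset_span (by simp)
      obtain ⟨a, c, h1, h2, h3⟩ := mem_pair_coords b hu
      obtain ⟨a', c', h1', h2', h3'⟩ := mem_pair_coords b hv
      have ha : a = 1 := by linear_combination -h1
      have hc : c = 0 := by linear_combination -h3
      have ha' : a' = 0 := by linear_combination -h1'
      have hc' : c' = 1 := by linear_combination -h3'
      rw [ha, hc] at h2
      rw [ha', hc'] at h2'
      have hts : (t - s) ^ 2 = 0 := by linear_combination h2 - s * h2'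
      have hts' : t - s = 0 := pow_eq_zero_iff (n := 2) (by norm_num) |>.mp hts
      congr 1
      exact sub_eq_zero.mp hts' 

lemma mem_of_smul_mem' {W : Submodule (ZMod p) L} {d : ZMod p} {x : L} (hd : d ≠ 0)
    (h : d • x ∈ W) : x ∈ W := by
  have := W.smul_mem d⁻¹ h
  rwa [smul_smul, inv_mul_cancel₀ hd, one_smul] at this

lemma exists_half_sqrt {p : ℕ} [Fact p.Prime] (β γ B : ZMod p)
    (h : B ^ 2 + 4 * γ * B - 4 * β = 0) :
    ∃ t : ZMod p, 2 * t = B ∧ t ^ 2 = β - γ * B := by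
  by_cases hp2 : (2 : ZMod p) = 0
  · have hp : p = 2 := by
      have h2 : (p : ℕ) ∣ 2 := by
        have : ((2 : ℕ) : ZMod p) = 0 := by exact_mod_cast hp2
        exact (ZMod.natCast_eq_zero_iff 2 p).mp this
      exact ((Nat.prime_dvd_prime_iff_eq (Fact.out : p.Prime) Nat.prime_two).mp h2)
    have h4 : (4 : ZMod p) = 0 := by
      have h44 : (4 : ZMod p) = 2 * 2 := by norm_num
      rw [h44, hp2, zero_mul]
    have hB0 : B = 0 := by
      have hb2 : B * B = 0 := by linear_combination h + (β - γ * B) * h4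
      exact mul_self_eq_zero.mp hb2
    refine ⟨β, by rw [hp2, zero_mul, hB0], ?_⟩
    rw [hB0, mul_zero, sub_zero]
    rw [show (2 : ℕ) = p from hp.symm]
    exact ZMod.pow_card β
  · refine ⟨2⁻¹ * B, ?_, ?_⟩
    · rw [← mul_assoc, mul_inv_cancel₀ hp2, one_mul]
    · field_simp
      linear_combination h

lemma count2 : {S : LieSubalgebra (ZMod p) L | finrank (ZMod p) S = 2}
    = Set.range (BMap b hhe hhf hef) := by
  have hfd : FiniteDimensional (ZMod p) L := Module.Finite.of_basis b
  have hL : finrank (ZMod p) L = 3 := by rw [finrank_eq_card_basis b]; simp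
  ext S
  simp only [Set.mem_setOf_eq, Set.mem_range]
  constructor
  · intro hS
    obtain ⟨W, hWdef⟩ : ∃ W' : Submodule (ZMod p) L, W' = Submodule.span (ZMod p)
        {(0 : ZMod p) • b 0 + (1 : ZMod p) • b 1 + (0 : ZMod p) • b 2,
         (0 : ZMod p) • b 0 + (0 : ZMod p) • b 1 + (1 : ZMod p) • b 2} := ⟨_, rfl⟩
    have hBnone : (BMap b hhe hhf hef none).toSubmodule = W := by rw [hWdef]; rfl
    have hWrank : finrank (ZMod p) W = 2 := by
      have := BMap_finrank b hhe hhf hef none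
      rwa [finrank_coe, hBnone] at this
    by_cases hA : ∀ x ∈ S.toSubmodule, b.repr x 0 = 0
    · refine ⟨none, ?_⟩
      apply LieSubalgebra.toSubmodule_injective
      rw [hBnone]
      have hle : S.toSubmodule ≤ W := by
        intro x hx
        rw [hWdef, Submodule.mem_span_pair]
        refine ⟨b.repr x 1, b.repr x 2, ?_⟩
        have hx0 := hA x hx
        have hrs := repr_sum b x
        rw [hx0] at hrs
        conv_rhs => rw [← hrs]
        module
      exact (Submodule.eq_of_le_of_finrank_eq hle
        (by rw [← finrank_coe, hS, hWrank])).symm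
    · push_neg at hA
      obtain ⟨x, hxS, hx0⟩ := hA
      obtain ⟨u, huS, hu0⟩ : ∃ u ∈ S.toSubmodule, b.repr u 0 = 1 := by
        refine ⟨(b.repr x 0)⁻¹ • x, S.toSubmodule.smul_mem _ hxS, ?_⟩
        rw [map_smul]
        exact inv_mul_cancel₀ hx0
      obtain ⟨β, γ, hu⟩ : ∃ β γ : ZMod p, (1 : ZMod p) • b 0 + β • b 1 + γ • b 2 = u :=
        ⟨_, _, by have := repr_sum b u; rwa [hu0] at this⟩
      -- find nonzero v in S ⊓ W
      have hSW : S.toSubmodule ⊓ W ≠ ⊥ := by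
        intro hbot
        have hdim := Submodule.finrank_sup_add_finrank_inf_eq S.toSubmodule W
        rw [hbot, finrank_bot] at hdim
        have hsup := Submodule.finrank_le (S.toSubmodule ⊔ W)
        rw [hL] at hsup
        rw [← finrank_coe, hS, hWrank] at hdim
        omega
      obtain ⟨v, hvSW, hv0⟩ := Submodule.exists_mem_ne_zero_of_ne_bot hSW
      rw [Submodule.mem_inf] at hvSW
      obtain ⟨hvS, hvW⟩ := hvSW
      have hv0' : b.repr v 0 = 0 := by
        rw [hWdef, Submodule.mem_span_pair] at hvW
        obtain ⟨a, c, hac⟩ := hvW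
        rw [← hac]
        simp only [map_add, map_smul, Finsupp.coe_add, Finsupp.coe_smul, Pi.add_apply,
          Pi.smul_apply, smul_eq_mul]
        simp [Finsupp.single_apply]
      obtain ⟨bv, cv, hv⟩ : ∃ bv cv : ZMod p, (0 : ZMod p) • b 0 + bv • b 1 + cv • b 2 = v :=
        ⟨_, _, by have := repr_sum b v; rwa [hv0'] at this⟩
      -- auxiliary element w
      have hwS : ⁅u, v⁆ + (2 * cv) • u ∈ S.toSubmodule :=
        add_mem (S.mem_toSubmodule.mpr
          (S.lie_mem (S.mem_toSubmodule.mp huS) (S.mem_toSubmodule.mp hvS)))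
          (S.toSubmodule.smul_mem _ huS)
      have hw : (0 : ZMod p) • b 0 + (4 * β * cv - 2 * γ * bv) • b 1
          + (bv + 2 * γ * cv) • b 2 = ⁅u, v⁆ + (2 * cv) • u := by
        rw [← hu, ← hv, lie_combo b hhe hhf hef]
        match_scalars <;> ring
      obtain ⟨d, hd⟩ : ∃ d : ZMod p,
          d = bv * (bv + 2 * γ * cv) - cv * (4 * β * cv - 2 * γ * bv) := ⟨_, rfl⟩
      have hd0 : d = 0 := by
        by_contra hdne
        have hb1 : d • ((0 : ZMod p) • b 0 + (1 : ZMod p) • b 1 + (0 : ZMod p) • b 2)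
            = (bv + 2 * γ * cv) • v - cv • (⁅u, v⁆ + (2 * cv) • u) := by
          rw [← hw, ← hv]
          match_scalars <;> (rw [hd]; ring)
        have hb1S : (0 : ZMod p) • b 0 + (1 : ZMod p) • b 1 + (0 : ZMod p) • b 2
            ∈ S.toSubmodule := by
          refine mem_of_smul_mem' hdne ?_
          rw [hb1]
          exact sub_mem (S.toSubmodule.smul_mem _ hvS) (S.toSubmodule.smul_mem _ hwS)
        have hb2 : d • ((0 : ZMod p) • b 0 + (0 : ZMod p) • b 1 + (1 : ZMod p) • b 2)
            = bv • (⁅u, v⁆ + (2 * cv) • u) - (4 * β * cv - 2 * γ * bv) • v := by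
          rw [← hw, ← hv]
          match_scalars <;> (rw [hd]; ring)
        have hb2S : (0 : ZMod p) • b 0 + (0 : ZMod p) • b 1 + (1 : ZMod p) • b 2
            ∈ S.toSubmodule := by
          refine mem_of_smul_mem' hdne ?_
          rw [hb2]
          exact sub_mem (S.toSubmodule.smul_mem _ hwS) (S.toSubmodule.smul_mem _ hvS)
        have hb0S : ((1 : ZMod p) • b 0 + (0 : ZMod p) • b 1 + (0 : ZMod p) • b 2)
            ∈ S.toSubmodule := by
          have he : (1 : ZMod p) • b 0 + (0 : ZMod p) • b 1 + (0 : ZMod p) • b 2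
              = u - β • ((0 : ZMod p) • b 0 + (1 : ZMod p) • b 1 + (0 : ZMod p) • b 2)
                - γ • ((0 : ZMod p) • b 0 + (0 : ZMod p) • b 1 + (1 : ZMod p) • b 2) := by
            rw [← hu]
            module
          rw [he]
          exact sub_mem (sub_mem huS (S.toSubmodule.smul_mem _ hb1S))
            (S.toSubmodule.smul_mem _ hb2S)
        have htop : S.toSubmodule = ⊤ := by
          rw [eq_top_iff, ← b.span_eq, Submodule.span_le]
          rintro y ⟨i, rfl⟩
          fin_cases i
          · simpa using hb0S
          · simpa using hb1S
          · simpa using hb2S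
        have hS' := hS
        rw [finrank_coe, htop, finrank_top, hL] at hS'
        norm_num at hS'
      -- cv ≠ 0
      have hexp : bv ^ 2 + 4 * γ * bv * cv - 4 * β * cv ^ 2 = 0 := by
        linear_combination hd0 - hd
      have hcv : cv ≠ 0 := by
        intro hcc
        have hbv : bv * bv = 0 := by
          linear_combination hexp + (4 * β * cv - 4 * γ * bv) * hcc
        have hbv0 : bv = 0 := mul_self_eq_zero.mp hbv
        apply hv0
        rw [← hv, hbv0, hcc]
        simp
      -- construct t
      obtain ⟨t, ht1, ht2⟩ : ∃ t : ZMod p, 2 * t = cv⁻¹ * bv ∧ t ^ 2 = β - γ * (cv⁻¹ * bv) := by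
        apply exists_half_sqrt
        field_simp
        linear_combination hexp
      refine ⟨some t, ?_⟩
      apply LieSubalgebra.toSubmodule_injective
      have hBsome : (BMap b hhe hhf hef (some t)).toSubmodule = Submodule.span (ZMod p)
          ({(1 : ZMod p) • b 0 + (t ^ 2) • b 1 + (0 : ZMod p) • b 2,
            (0 : ZMod p) • b 0 + (2 * t) • b 1 + (1 : ZMod p) • b 2} : Set L) := rfl
      rw [hBsome]
      have hvt : (0 : ZMod p) • b 0 + (2 * t) • b 1 + (1 : ZMod p) • b 2 = cv⁻¹ • v := by
        rw [← hv]
        match_scalars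
        · simp
        · rw [ht1]; ring
        · field_simp
      have hut : (1 : ZMod p) • b 0 + (t ^ 2) • b 1 + (0 : ZMod p) • b 2
          = u - γ • (cv⁻¹ • v) := by
        rw [← hv, ← hu]
        match_scalars
        · field_simp; simp
        · rw [ht2]; field_simp
        · field_simp; simp
      have hvtS : (0 : ZMod p) • b 0 + (2 * t) • b 1 + (1 : ZMod p) • b 2 ∈ S.toSubmodule := by
        rw [hvt]; exact S.toSubmodule.smul_mem _ hvS
      have hutS : (1 : ZMod p) • b 0 + (t ^ 2) • b 1 + (0 : ZMod p) • b 2 ∈ S.toSubmodule := by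
        rw [hut]
        exact sub_mem huS (S.toSubmodule.smul_mem _ (S.toSubmodule.smul_mem _ hvS))
      have hle : Submodule.span (ZMod p)
          ({(1 : ZMod p) • b 0 + (t ^ 2) • b 1 + (0 : ZMod p) • b 2,
            (0 : ZMod p) • b 0 + (2 * t) • b 1 + (1 : ZMod p) • b 2} : Set L)
          ≤ S.toSubmodule := by
        rw [Submodule.span_le]
        intro y hy
        rcases hy with rfl | hy
        · exact hutS
        · rw [Set.mem_singleton_iff] at hy
          subst hy
          exact hvtS
      refine Submodule.eq_of_le_of_finrank_eq hle ?_
      rw [← finrank_coe, hS]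
      have hfin := BMap_finrank b hhe hhf hef (some t)
      rwa [finrank_coe, hBsome] at hfin
  · rintro ⟨w, rfl⟩
    exact BMap_finrank b hhe hhf hef w

end

/-- For `sl_2(F_p) = ⟨e, f, h : [h,e]=2e, [h,f]=-2f, [e,f]=h⟩`, the number of Lie
subalgebras of codimension `k` is `1, 1+p, 1+p+p^2, 1` for `k = 0,1,2,3`, i.e. its
subalgebra zeta polynomial is `1 + (1+p)t + (1+p+p^2)t^2 + t^3`. -/
theorem sl2_subalgebra_count (p : ℕ) [Fact p.Prime]
    (L : Type*) [LieRing L] [LieAlgebra (ZMod p) L]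
    (b : Basis (Fin 3) (ZMod p) L)
    (hhe : ⁅b 2, b 0⁆ = (2 : ZMod p) • b 0)
    (hhf : ⁅b 2, b 1⁆ = -((2 : ZMod p) • b 1))
    (hef : ⁅b 0, b 1⁆ = b 2) :
    Nat.card {S : LieSubalgebra (ZMod p) L | finrank (ZMod p) S = 3} = 1 ∧
    Nat.card {S : LieSubalgebra (ZMod p) L | finrank (ZMod p) S = 2} = 1 + p ∧
    Nat.card {S : LieSubalgebra (ZMod p) L | finrank (ZMod p) S = 1} = 1 + p + p ^ 2 ∧
    Nat.card {S : LieSubalgebra (ZMod p) L | finrank (ZMod p) S = 0} = 1 := by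
  refine ⟨?_, ?_, ?_, ?_⟩
  · rw [count3 b, Nat.card_coe_set_eq, Set.ncard_singleton]
  · rw [count2 b hhe hhf hef, Nat.card_range_of_injective (BMap_injective b hhe hhf hef),
      Nat.card_congr (Equiv.optionEquivSumPUnit.{0, 0} (ZMod p)), Nat.card_sum, Nat.card_zmod]
    simp [Nat.add_comm]
  · rw [count1 b, Nat.card_range_of_injective (lineMap_injective b),
      Nat.card_sum, Nat.card_sum, Nat.card_prod, Nat.card_zmod]
    simp only [Nat.card_unique]
    ring
  · rw [count0 b, Nat.card_coe_set_eq, Set.ncard_singleton]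
end
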